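/- Let C ⊆ ℝⁿ be a closed set that is Clarke regular at x̄ ∈ C, i.e., the regular normal cone and limiting normal cone coincide at every point of C near x̄ (or at least at x̄, with outer semicontinuity of the normal cone map). Then for every ε > 0 there exists δ > 0 such that for every x ∈ (B(x̄, δ) ∩ C) \ {x̄} and every unit vector v ∈ N_C(x), one has ⟨v, x - x̄⟩ ≤ ε ‖x - x̄‖. -/
import Mathlib


open scoped RealInnerProductSpace
open Metric Filter

/-- The regular (Fréchet) normal cone of `C` at `x`. -/
def regNormalCone {n : ℕ} (C : Set (EuclideanSpace ℝ (Fin n)))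
    (x : EuclideanSpace ℝ (Fin n)) : Set (EuclideanSpace ℝ (Fin n)) :=
  {v | ∀ ε > 0, ∃ δ > 0, ∀ y ∈ C, ‖y - x‖ < δ → ⟪v, y - x⟫ ≤ ε * ‖y - x‖}

/-- The limiting normal cone of `C` at `x`: limits of regular normals at points of `C`
converging to `x`. -/
def limNormalCone {n : ℕ} (C : Set (EuclideanSpace ℝ (Fin n)))
    (x : EuclideanSpace ℝ (Fin n)) : Set (EuclideanSpace ℝ (Fin n)) :=
  {v | ∃ xs vs : ℕ → EuclideanSpace ℝ (Fin n), (∀ i, xs i ∈ C) ∧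
    Tendsto xs atTop (nhds x) ∧ (∀ i, vs i ∈ regNormalCone C (xs i)) ∧
    Tendsto vs atTop (nhds v)}

/-- Supporting hyperplane near a point: if `C` is closed and Clarke regular at `x̄ ∈ C`
(near `x̄` the regular and limiting normal cones coincide), then for every `ε > 0` there is
`δ > 0` such that for every `x ∈ B(x̄,δ) ∩ C`, `x ≠ x̄`, and unit `v ∈ N_C(x)`,
`⟪v, x - x̄⟫ ≤ ε ‖x - x̄‖`. -/
theorem supporting_hyperplane_near_point {n : ℕ}
    (C : Set (EuclideanSpace ℝ (Fin n))) (hC : IsClosed C)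
    (xbar : EuclideanSpace ℝ (Fin n)) (hxbar : xbar ∈ C)
    (hClarke : ∃ r > 0, ∀ x ∈ C ∩ closedBall xbar r,
      regNormalCone C x = limNormalCone C x) :
    ∀ ε > 0, ∃ δ > 0, ∀ x ∈ closedBall xbar δ ∩ C, x ≠ xbar →
      ∀ v ∈ limNormalCone C x, ‖v‖ = 1 → ⟪v, x - xbar⟫ ≤ ε * ‖x - xbar‖ := by
  intro ε hε
  by_contra hcon
  push_neg at hcon
  obtain ⟨r, hr, hreg⟩ := hClarke
  have hseq : ∀ k : ℕ, ∃ x, (x ∈ closedBall xbar (min r (1/(k+1))) ∩ C) ∧ x ≠ xbar ∧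
      ∃ v ∈ limNormalCone C x, ‖v‖ = 1 ∧ ε * ‖x - xbar‖ < ⟪v, x - xbar⟫ := by
    intro k
    have hδ : (0:ℝ) < min r (1/(k+1)) := lt_min hr (by positivity)
    obtain ⟨x, hx, h1, h2⟩ := hcon _ hδ
    exact ⟨x, hx, h1, h2⟩
  choose x hx hxne v hvmem hvnorm hvineq using hseq
  have hxC : ∀ k, x k ∈ C := fun k => (hx k).2
  have hxball : ∀ k, x k ∈ closedBall xbar r := fun k =>
    closedBall_subset_closedBall (min_le_left _ _) (hx k).1
  have hvreg : ∀ k, v k ∈ regNormalCone C (x k) := fun k => by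
    rw [hreg (x k) ⟨hxC k, hxball k⟩]; exact hvmem k
  -- x k tends to xbar
  have hxconv : Tendsto x atTop (nhds xbar) := by
    rw [tendsto_iff_dist_tendsto_zero]
    apply squeeze_zero (fun k => dist_nonneg)
      (fun k => le_trans ((hx k).1 : dist (x k) xbar ≤ _) (min_le_right _ _))
    exact tendsto_one_div_add_atTop_nhds_zero_nat
  -- extract convergent subsequence of v
  have hvsphere : ∀ k, v k ∈ sphere (0 : EuclideanSpace ℝ (Fin n)) 1 := fun k => by
    simpa [mem_sphere_iff_norm] using hvnorm k
  obtain ⟨a, ha, φ, hφ, hvconv⟩ :=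
    (isCompact_sphere (0 : EuclideanSpace ℝ (Fin n)) 1).tendsto_subseq hvsphere
  have hxφconv : Tendsto (x ∘ φ) atTop (nhds xbar) := hxconv.comp hφ.tendsto_atTop
  have halim : a ∈ limNormalCone C xbar :=
    ⟨x ∘ φ, v ∘ φ, fun i => hxC (φ i), hxφconv, fun i => hvreg (φ i), hvconv⟩
  have hareg : a ∈ regNormalCone C xbar := by
    rw [hreg xbar ⟨hxbar, mem_closedBall_self hr.le⟩]; exact halim
  obtain ⟨δ', hδ', hδ'prop⟩ := hareg (ε/4) (by positivity)
  -- choose k large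
  have h1 : ∀ᶠ k in atTop, ‖x (φ k) - xbar‖ < δ' := by
    have := (tendsto_iff_norm_sub_tendsto_zero.mp hxφconv)
    exact this.eventually_lt_const hδ' |>.mono (fun k hk => by simpa using hk)
  have h2 : ∀ᶠ k in atTop, ‖(v ∘ φ) k - a‖ < ε/4 := by
    have := (tendsto_iff_norm_sub_tendsto_zero.mp hvconv)
    exact this.eventually_lt_const (by positivity)
  obtain ⟨k, hk1, hk2⟩ := (h1.and h2).exists
  simp only [Function.comp_apply] at hk2
  set y := x (φ k) - xbar with hy
  have hd : 0 < ‖y‖ := by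
    rw [norm_pos_iff]
    exact sub_ne_zero.mpr (hxne (φ k))
  have key : ⟪v (φ k), y⟫ = ⟪a, y⟫ + ⟪v (φ k) - a, y⟫ := by
    rw [inner_sub_left]; ring
  have hbound1 : ⟪a, y⟫ ≤ (ε/4) * ‖y‖ := hδ'prop _ (hxC (φ k)) hk1
  have hbound2 : ⟪v (φ k) - a, y⟫ ≤ ‖v (φ k) - a‖ * ‖y‖ := real_inner_le_norm _ _
  have hbound2' : ⟪v (φ k) - a, y⟫ ≤ (ε/4) * ‖y‖ :=
    hbound2.trans (by nlinarith [hk2, hd])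
  have := hvineq (φ k)
  rw [key] at this
  nlinarith
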